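/- Assume p_γ > 0 and let 0 ≤ β ≤ β′, with Zᴮ := ∫ √(ρ_β·ρ_{β′}) dμ > 0 and G := G(P_β, P_{β′}) the Bhattacharyya coefficient, ratios defined to be 0 where denominators vanish. Then the sum of the squared coefficients of variation of the numerator and denominator of the geometric-bridge estimator satisfies Var_{P_β}(√(ρ_{β′}(X)/ρ_β(X))) / (E_{P_β}[√(ρ_{β′}(X)/ρ_β(X))])² + Var_{P_{β′}}(√(ρ_β(X)/ρ_{β′}(X))) / (E_{P_{β′}}[√(ρ_β(X)/ρ_{β′}(X))])² = 2·(G⁻² − 1). -/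

import Mathlib

open MeasureTheory Real ProbabilityTheory

lemma bridge_aux {X : Type*} [MeasurableSpace X] (μ : Measure X)
    (ρa ρb : X → ℝ) (hma : Measurable ρa) (hmb : Measurable ρb)
    (h0a : ∀ x, 0 ≤ ρa x) (h0b : ∀ x, 0 ≤ ρb x)
    (hia : Integrable ρa μ) (hib : Integrable ρb μ)
    (hzero : ∀ x, ρa x = 0 → ρb x = 0)
    (hsq : Integrable (fun x => Real.sqrt (ρa x * ρb x)) μ)
    (Za Zb ZB : ℝ) (hZa : Za = ∫ x, ρa x ∂μ) (hZb : Zb = ∫ x, ρb x ∂μ)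
    (hZB : ZB = ∫ x, Real.sqrt (ρa x * ρb x) ∂μ)
    (hZapos : 0 < Za) (hZbpos : 0 < Zb) (hZBpos : 0 < ZB) :
    variance (fun x => Real.sqrt (ρb x / ρa x))
        (μ.withDensity (fun x => ENNReal.ofReal (ρa x / Za)))
      / (∫ x, Real.sqrt (ρb x / ρa x)
          ∂(μ.withDensity (fun x => ENNReal.ofReal (ρa x / Za)))) ^ 2
    = Za * Zb / ZB ^ 2 - 1 := by
  set P : Measure X := μ.withDensity (fun x => ENNReal.ofReal (ρa x / Za)) with hPdef
  have hmeasg : Measurable (fun x => ENNReal.ofReal (ρa x / Za)) :=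
    (hma.div_const Za).ennreal_ofReal
  have hdivnn : ∀ x, 0 ≤ ρa x / Za := fun x => div_nonneg (h0a x) hZapos.le
  -- P is a probability measure
  have hprob : IsProbabilityMeasure P := by
    constructor
    rw [hPdef, withDensity_apply _ MeasurableSet.univ, Measure.restrict_univ,
      ← ofReal_integral_eq_lintegral_ofReal (hia.div_const Za) (Filter.Eventually.of_forall hdivnn)]
    rw [integral_div, ← hZa, div_self hZapos.ne']
    simp
  -- integral transfer lemma
  have hint : ∀ g : X → ℝ, (∫ x, g x ∂P) = ∫ x, (ρa x / Za) * g x ∂μ := by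
    intro g
    have hco : (fun x => ENNReal.ofReal (ρa x / Za))
        = fun x => (((ρa x / Za).toNNReal : NNReal) : ENNReal) := rfl
    rw [hPdef, hco, integral_withDensity_eq_integral_smul
      ((hma.div_const Za).real_toNNReal) g]
    refine integral_congr_ae (Filter.Eventually.of_forall fun x => ?_)
    simp [NNReal.smul_def, Real.coe_toNNReal _ (hdivnn x)]
  -- pointwise identities
  have hpt1 : ∀ x, (ρa x / Za) * Real.sqrt (ρb x / ρa x) = Real.sqrt (ρa x * ρb x) / Za := by
    intro x
    rcases eq_or_lt_of_le (h0a x) with h | h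
    · simp [← h]
    · have hs : Real.sqrt (ρa x) ≠ 0 := by positivity
      rw [Real.sqrt_div (h0b x), Real.sqrt_mul (h0a x)]
      field_simp
      linear_combination (-(Real.sqrt (ρb x))) * Real.mul_self_sqrt (h0a x)
  have hpt2 : ∀ x, (ρa x / Za) * (ρb x / ρa x) = ρb x / Za := by
    intro x
    rcases eq_or_lt_of_le (h0a x) with h | h
    · simp [← h, hzero x h.symm]
    · field_simp
  have hA : (∫ x, Real.sqrt (ρb x / ρa x) ∂P) = ZB / Za := by
    rw [hint, hZB, ← integral_div]
    exact integral_congr_ae (Filter.Eventually.of_forall hpt1)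
  have hsm : AEStronglyMeasurable (fun x => Real.sqrt (ρb x / ρa x)) P :=
    (Real.continuous_sqrt.measurable.comp (hmb.div hma)).aestronglyMeasurable
  have hint2 : Integrable (fun x => ρb x / ρa x) P := by
    rw [hPdef, integrable_withDensity_iff hmeasg
      (Filter.Eventually.of_forall fun x => ENNReal.ofReal_lt_top)]
    refine (hib.div_const Za).congr (Filter.Eventually.of_forall fun x => ?_)
    show ρb x / Za = ρb x / ρa x * (ENNReal.ofReal (ρa x / Za)).toReal
    rw [ENNReal.toReal_ofReal (hdivnn x), mul_comm]
    exact (hpt2 x).symm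
  have hmem : MemLp (fun x => Real.sqrt (ρb x / ρa x)) 2 P := by
    refine (memLp_two_iff_integrable_sq hsm).2 ?_
    refine hint2.congr (Filter.Eventually.of_forall fun x => ?_)
    exact (Real.sq_sqrt (div_nonneg (h0b x) (h0a x))).symm
  have hB : (∫ x, Real.sqrt (ρb x / ρa x) ^ 2 ∂P) = Zb / Za := by
    have : ∀ x, Real.sqrt (ρb x / ρa x) ^ 2 = ρb x / ρa x :=
      fun x => Real.sq_sqrt (div_nonneg (h0b x) (h0a x))
    simp_rw [this]
    rw [hint, hZb, ← integral_div]
    refine integral_congr_ae (Filter.Eventually.of_forall fun x => ?_)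
    exact hpt2 x
  have hvar : variance (fun x => Real.sqrt (ρb x / ρa x)) P = Zb / Za - (ZB / Za) ^ 2 := by
    rw [variance_eq_sub hmem]
    have : (∫ x, ((fun x => Real.sqrt (ρb x / ρa x)) ^ 2) x ∂P)
        = ∫ x, Real.sqrt (ρb x / ρa x) ^ 2 ∂P := by
      refine integral_congr_ae (Filter.Eventually.of_forall fun x => ?_)
      simp
    rw [this, hA, hB]
  rw [hvar, hA]
  have h1 : Za ≠ 0 := hZapos.ne'
  have h2 : ZB ≠ 0 := hZBpos.ne'
  field_simp

theorem bridge_cv_eq_bhattacharyya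
    {X : Type*} [MeasurableSpace X] (μ : Measure X) [SigmaFinite μ]
    (ρ₀ : X → ℝ) (hρ₀meas : Measurable ρ₀) (hρ₀nonneg : ∀ x, 0 ≤ ρ₀ x)
    (hρ₀int : Integrable ρ₀ μ)
    (f : X → ℝ) (hfmeas : Measurable f) (γ : ℝ)
    (ρ : ℝ → X → ℝ) (hρ : ∀ β x, ρ β x = ρ₀ x * Real.exp (β * min (γ - f x) 0))
    (Z : ℝ → ℝ) (hZ : ∀ β, Z β = ∫ x, ρ β x ∂μ)
    (hZ₀pos : 0 < Z 0)
    (P : ℝ → Measure X)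
    (hP : ∀ β, P β = μ.withDensity (fun x => ENNReal.ofReal (ρ β x / Z β)))
    (pγ : ℝ) (hpγ : pγ = (Z 0)⁻¹ * ∫ x in {x | f x ≤ γ}, ρ₀ x ∂μ)
    (hpγpos : 0 < pγ)
    (β β' : ℝ) (hβ : 0 ≤ β) (hββ' : β ≤ β')
    (ZB : ℝ) (hZB : ZB = ∫ x, Real.sqrt (ρ β x * ρ β' x) ∂μ) (hZBpos : 0 < ZB)
    (G : ℝ) (hG : G = ∫ x, Real.sqrt ((ρ β x / Z β) * (ρ β' x / Z β')) ∂μ) :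
    variance (fun x => Real.sqrt (ρ β' x / ρ β x)) (P β)
      / (∫ x, Real.sqrt (ρ β' x / ρ β x) ∂(P β)) ^ 2
    + variance (fun x => Real.sqrt (ρ β x / ρ β' x)) (P β')
      / (∫ x, Real.sqrt (ρ β x / ρ β' x) ∂(P β')) ^ 2
    = 2 * (G⁻¹ ^ 2 - 1) := by
  have hβ' : 0 ≤ β' := hβ.trans hββ'
  -- basic facts about ρ b for 0 ≤ b
  have hρnn : ∀ b x, 0 ≤ ρ b x := by
    intro b x; rw [hρ]; exact mul_nonneg (hρ₀nonneg x) (Real.exp_pos _).le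
  have hρle : ∀ b x, 0 ≤ b → ρ b x ≤ ρ₀ x := by
    intro b x hb
    rw [hρ]
    calc ρ₀ x * Real.exp (b * min (γ - f x) 0)
        ≤ ρ₀ x * 1 := by
          refine mul_le_mul_of_nonneg_left ?_ (hρ₀nonneg x)
          rw [Real.exp_le_one_iff]
          exact mul_nonpos_of_nonneg_of_nonpos hb (min_le_right _ _)
      _ = ρ₀ x := mul_one _
  have hρmeas : ∀ b, Measurable (ρ b) := by
    intro b
    have : ρ b = fun x => ρ₀ x * Real.exp (b * min (γ - f x) 0) := funext (hρ b)
    rw [this]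
    exact hρ₀meas.mul ((measurable_const.mul
      ((measurable_const.sub hfmeas).min measurable_const)).exp)
  have hρint : ∀ b, 0 ≤ b → Integrable (ρ b) μ := by
    intro b hb
    refine hρ₀int.mono (hρmeas b).aestronglyMeasurable
      (Filter.Eventually.of_forall fun x => ?_)
    rw [Real.norm_eq_abs, Real.norm_eq_abs, abs_of_nonneg (hρnn b x),
      abs_of_nonneg (hρ₀nonneg x)]
    exact hρle b x hb
  have hρzero : ∀ b b' x, ρ b x = 0 → ρ b' x = 0 := by
    intro b b' x h
    rw [hρ] at h ⊢
    rcases mul_eq_zero.1 h with h0 | h0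
    · rw [h0, zero_mul]
    · exact absurd h0 (Real.exp_ne_zero _)
  -- positivity of Z b for 0 ≤ b
  have hS : MeasurableSet {x | f x ≤ γ} := measurableSet_le hfmeas measurable_const
  have hI : 0 < ∫ x in {x | f x ≤ γ}, ρ₀ x ∂μ := by
    have : (∫ x in {x | f x ≤ γ}, ρ₀ x ∂μ) = Z 0 * pγ := by
      rw [hpγ]; field_simp
    rw [this]
    exact mul_pos hZ₀pos hpγpos
  have hZpos : ∀ b, 0 ≤ b → 0 < Z b := by
    intro b hb
    have heq : (∫ x in {x | f x ≤ γ}, ρ₀ x ∂μ) = ∫ x in {x | f x ≤ γ}, ρ b x ∂μ := by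
      refine setIntegral_congr_fun hS fun x hx => ?_
      rw [hρ, min_eq_right (sub_nonneg.2 hx), mul_zero, Real.exp_zero, mul_one]
    have hle : (∫ x in {x | f x ≤ γ}, ρ b x ∂μ) ≤ ∫ x, ρ b x ∂μ :=
      setIntegral_le_integral (hρint b hb) (Filter.Eventually.of_forall (hρnn b))
    rw [hZ]
    exact lt_of_lt_of_le (heq ▸ hI) hle
  have hZβ := hZpos β hβ
  have hZβ' := hZpos β' hβ'
  -- integrability of the geometric mean
  have hsq : Integrable (fun x => Real.sqrt (ρ β x * ρ β' x)) μ := by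
    refine hρ₀int.mono (Real.continuous_sqrt.measurable.comp
      ((hρmeas β).mul (hρmeas β'))).aestronglyMeasurable
      (Filter.Eventually.of_forall fun x => ?_)
    rw [Real.norm_eq_abs, Real.norm_eq_abs, abs_of_nonneg (Real.sqrt_nonneg _),
      abs_of_nonneg (hρ₀nonneg x)]
    calc Real.sqrt (ρ β x * ρ β' x)
        ≤ Real.sqrt (ρ₀ x * ρ₀ x) :=
          Real.sqrt_le_sqrt (mul_le_mul (hρle β x hβ) (hρle β' x hβ')
            (hρnn β' x) (hρ₀nonneg x))
      _ = ρ₀ x := Real.sqrt_mul_self (hρ₀nonneg x)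
  have hsq' : Integrable (fun x => Real.sqrt (ρ β' x * ρ β x)) μ := by
    refine hsq.congr (Filter.Eventually.of_forall fun x => ?_)
    dsimp only; rw [mul_comm]
  have hZB' : ZB = ∫ x, Real.sqrt (ρ β' x * ρ β x) ∂μ := by
    rw [hZB]
    exact integral_congr_ae (Filter.Eventually.of_forall fun x => by dsimp only; rw [mul_comm])
  -- apply the auxiliary lemma twice
  have h1 := bridge_aux μ (ρ β) (ρ β') (hρmeas β) (hρmeas β') (hρnn β) (hρnn β')
    (hρint β hβ) (hρint β' hβ') (hρzero β β') hsq (Z β) (Z β') ZB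
    (hZ β) (hZ β') hZB hZβ hZβ' hZBpos
  have h2 := bridge_aux μ (ρ β') (ρ β) (hρmeas β') (hρmeas β) (hρnn β') (hρnn β)
    (hρint β' hβ') (hρint β hβ) (hρzero β' β) hsq' (Z β') (Z β) ZB
    (hZ β') (hZ β) hZB' hZβ' hZβ hZBpos
  rw [hP β, hP β']
  rw [h1, h2]
  -- compute G
  have hGval : G = ZB / Real.sqrt (Z β * Z β') := by
    rw [hG, hZB, ← integral_div]
    refine integral_congr_ae (Filter.Eventually.of_forall fun x => ?_)
    dsimp only
    rw [div_mul_div_comm, Real.sqrt_div (mul_nonneg (hρnn β x) (hρnn β' x))]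
  have hGsq : G⁻¹ ^ 2 = Z β * Z β' / ZB ^ 2 := by
    rw [hGval, inv_div, div_pow, Real.sq_sqrt (mul_nonneg hZβ.le hZβ'.le)]
  rw [hGsq]
  ring
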